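/- Let k be a field. Any connected graded left counital k-bialgebra H is a left counital right antipode Hopf algebra: there exists a k-linear map S : H → H with id_H ∗ S = μ∘ε, given recursively by S(1) = 1 and S(x) = −∑_{(x)} x′ S(x″) for x ∈ ker(ε), where Δ̃(x) = ∑_{(x)} x′⊗x″. -/

import Mathlib

open TensorProduct

variable (k H : Type*) [Field k] [Ring H] [Algebra k H]

/-- The image `U ⊗ V` of two submodules inside `M ⊗ M`. -/
noncomputable def tpSub {M : Type*} [AddCommGroup M] [Module k M]
    (U V : Submodule k M) : Submodule k (M ⊗[k] M) :=
  LinearMap.range (TensorProduct.map U.subtype V.subtype)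

/-- `H` is a connected graded left counital `k`-bialgebra: a `k`-algebra with an internal
grading `ℋ` with `ℋ⁽ᵖ⁾ℋ⁽ᑫ⁾ ⊆ ℋ⁽ᵖ⁺ᑫ⁾`, `ℋ⁽⁰⁾ = im μ = k`, with an algebra-homomorphism
coproduct `Δ` which is coassociative and graded in the sense
`Δ(ℋ⁽ⁿ⁾) ⊆ (ℋ⁽⁰⁾ ⊗ ℋ⁽ⁿ⁾) ⊕ (⊕_{p+q=n, p,q>0} ℋ⁽ᵖ⁾ ⊗ ℋ⁽ᑫ⁾)`, and an algebra-homomorphism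
counit `ε` satisfying the left counicity `(ε ⊗ id)Δ = β_ℓ` and `ker ε = ⊕_{n≥1} ℋ⁽ⁿ⁾`. -/
structure IsConnGradedLeftCounitalBialgebra (ℋ : ℕ → Submodule k H)
    (Δ : H →ₐ[k] H ⊗[k] H) (ε : H →ₐ[k] k) : Prop where
  internal : DirectSum.IsInternal ℋ
  mul_mem : ∀ (p q : ℕ) (x y : H), x ∈ ℋ p → y ∈ ℋ q → x * y ∈ ℋ (p + q)
  coassoc : ∀ x : H, (TensorProduct.assoc k H H H)
      (TensorProduct.map Δ.toLinearMap LinearMap.id (Δ x)) =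
      TensorProduct.map LinearMap.id Δ.toLinearMap (Δ x)
  left_counit : ∀ x : H, TensorProduct.map ε.toLinearMap LinearMap.id (Δ x) = (1 : k) ⊗ₜ[k] x
  graded_coproduct : ∀ n : ℕ, ∀ x ∈ ℋ n, Δ x ∈
      tpSub k (ℋ 0) (ℋ n) ⊔
        ⨆ (p : ℕ) (q : ℕ) (_ : p + q = n) (_ : 0 < p) (_ : 0 < q), tpSub k (ℋ p) (ℋ q)
  connected : ℋ 0 = LinearMap.range (Algebra.linearMap k H)
  ker_counit : LinearMap.ker ε.toLinearMap = ⨆ (n : ℕ) (_ : 0 < n), ℋ n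

namespace ConnGradedAntipodeAux

variable {k H : Type*} [Field k] [Ring H] [Algebra k H]
variable (ℋ : ℕ → Submodule k H)

/-- The projection onto the `n`-th graded piece. -/
noncomputable def proj (internal : DirectSum.IsInternal ℋ) (n : ℕ) : H →ₗ[k] H :=
  (ℋ n).subtype ∘ₗ (DirectSum.component k ℕ (fun i => ℋ i) n) ∘ₗ
    (LinearEquiv.ofBijective (DirectSum.coeLinearMap ℋ) internal).symm.toLinearMap

theorem proj_of_mem (internal : DirectSum.IsInternal ℋ) {n : ℕ} {x : H} (hx : x ∈ ℋ n) :
    proj ℋ internal n x = x := by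
  simp only [proj, LinearMap.coe_comp, Function.comp_apply, LinearEquiv.coe_coe,
    Submodule.coe_subtype]
  rw [show (DirectSum.component k ℕ (fun i => ℋ i) n)
      ((LinearEquiv.ofBijective (DirectSum.coeLinearMap ℋ) internal).symm x) =
      (LinearEquiv.ofBijective (DirectSum.coeLinearMap ℋ) internal).symm x n from rfl,
    internal.ofBijective_coeLinearMap_of_mem hx]

theorem proj_of_mem_ne (internal : DirectSum.IsInternal ℋ) {n j : ℕ} (hnj : n ≠ j) {x : H}
    (hx : x ∈ ℋ n) : proj ℋ internal j x = 0 := by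
  simp only [proj, LinearMap.coe_comp, Function.comp_apply, LinearEquiv.coe_coe,
    Submodule.coe_subtype]
  rw [show (DirectSum.component k ℕ (fun i => ℋ i) j)
      ((LinearEquiv.ofBijective (DirectSum.coeLinearMap ℋ) internal).symm x) =
      (LinearEquiv.ofBijective (DirectSum.coeLinearMap ℋ) internal).symm x j from rfl,
    internal.ofBijective_coeLinearMap_of_mem_ne hnj hx]
  rfl

/-- The truncated antipode, defined recursively. -/
noncomputable def Fmap (internal : DirectSum.IsInternal ℋ) (Δ : H →ₐ[k] H ⊗[k] H) :
    ℕ → (H →ₗ[k] H)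
  | 0 => proj ℋ internal 0
  | (n + 1) => Fmap internal Δ n -
      ((LinearMap.mul' k H ∘ₗ
          TensorProduct.map LinearMap.id (Fmap internal Δ n)) ∘ₗ Δ.toLinearMap) ∘ₗ
        proj ℋ internal (n + 1)

theorem Fmap_eq_zero (internal : DirectSum.IsInternal ℋ) (Δ : H →ₐ[k] H ⊗[k] H)
    {n : ℕ} {x : H} (hx : x ∈ ℋ n) : ∀ m, m < n → Fmap ℋ internal Δ m x = 0 := by
  intro m
  induction m with
  | zero => intro h0; simp [Fmap, proj_of_mem_ne ℋ internal (by omega : n ≠ 0) hx]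
  | succ m ih =>
      intro hm
      simp [Fmap, ih (by omega), proj_of_mem_ne ℋ internal (by omega : n ≠ m + 1) hx]

theorem Fmap_agree (internal : DirectSum.IsInternal ℋ) (Δ : H →ₐ[k] H ⊗[k] H)
    {q : ℕ} {x : H} (hx : x ∈ ℋ q) : ∀ m, q ≤ m →
    Fmap ℋ internal Δ m x = Fmap ℋ internal Δ q x := by
  intro m
  induction m with
  | zero => intro h0; obtain rfl : q = 0 := Nat.le_zero.mp h0; rfl
  | succ m ih =>
      intro hm
      rcases eq_or_lt_of_le hm with h | h
      · rw [h]
      · have hqm : q ≤ m := by omega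
        simp [Fmap, ih hqm, proj_of_mem_ne ℋ internal (by omega : q ≠ m + 1) hx]

/-- The antipode. -/
noncomputable def Smap (internal : DirectSum.IsInternal ℋ) (Δ : H →ₐ[k] H ⊗[k] H) :
    H →ₗ[k] H :=
  (DirectSum.toModule k ℕ H fun n => (Fmap ℋ internal Δ n) ∘ₗ (ℋ n).subtype) ∘ₗ
    (LinearEquiv.ofBijective (DirectSum.coeLinearMap ℋ) internal).symm.toLinearMap

theorem Smap_of_mem (internal : DirectSum.IsInternal ℋ) (Δ : H →ₐ[k] H ⊗[k] H)
    {n : ℕ} {x : H} (hx : x ∈ ℋ n) :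
    Smap ℋ internal Δ x = Fmap ℋ internal Δ n x := by
  have he : (LinearEquiv.ofBijective (DirectSum.coeLinearMap ℋ) internal).symm x =
      DirectSum.lof k ℕ (fun i => ℋ i) n ⟨x, hx⟩ := by
    rw [LinearEquiv.symm_apply_eq]
    show x = DirectSum.coeLinearMap ℋ (DirectSum.lof k ℕ (fun i => ℋ i) n ⟨x, hx⟩)
    rw [DirectSum.lof_eq_of,
      DirectSum.coeLinearMap_of]
  simp only [Smap, LinearMap.coe_comp, Function.comp_apply, LinearEquiv.coe_coe, he,
    DirectSum.toModule_lof]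
  rfl

end ConnGradedAntipodeAux

open ConnGradedAntipodeAux in
/-- A connected graded left counital bialgebra over a field `k` is a left counital right
antipode Hopf algebra: there is a `k`-linear map `S : H → H` with `S(1) = 1` and
`id_H ∗ S = μ ∘ ε`, i.e. `m ∘ (id ⊗ S) ∘ Δ = μ ∘ ε`. -/
theorem connGraded_right_antipode (ℋ : ℕ → Submodule k H)
    (Δ : H →ₐ[k] H ⊗[k] H) (ε : H →ₐ[k] k)
    (hH : IsConnGradedLeftCounitalBialgebra k H ℋ Δ ε) :
    ∃ S : H →ₗ[k] H, S 1 = 1 ∧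
      ∀ x : H, (LinearMap.mul' k H) (TensorProduct.map LinearMap.id S (Δ x)) =
        algebraMap k H (ε x) := by
  obtain ⟨internal, mul_mem, coassoc, left_counit, graded, connected, kerε⟩ := hH
  set S := Smap ℋ internal Δ with hS
  -- `1 ∈ ℋ 0`
  have h1mem : (1 : H) ∈ ℋ 0 := by
    rw [connected]; exact ⟨1, by simp⟩
  -- `S 1 = 1`
  have hS1 : S 1 = 1 := by
    rw [hS, Smap_of_mem ℋ internal Δ h1mem]
    show proj ℋ internal 0 1 = 1
    exact proj_of_mem ℋ internal h1mem
  -- positive-degree pieces lie in ker ε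
  have hker : ∀ p : ℕ, 0 < p → ∀ x ∈ ℋ p, ε x = 0 := by
    intro p hp x hx
    have : ℋ p ≤ LinearMap.ker ε.toLinearMap := by
      rw [kerε]
      exact le_iSup_of_le p (le_iSup_of_le hp le_rfl)
    exact this hx
  -- `S` agrees with `Fmap m` on pieces of degree ≤ m
  have hSF : ∀ (m q : ℕ), q ≤ m → ∀ x ∈ ℋ q, S x = Fmap ℋ internal Δ m x := by
    intro m q hqm x hx
    rw [hS, Smap_of_mem ℋ internal Δ hx, Fmap_agree ℋ internal Δ hx m hqm]
  refine ⟨S, hS1, ?_⟩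
  -- main identity, degree by degree
  have main : ∀ n : ℕ, ∀ x ∈ ℋ n,
      (LinearMap.mul' k H) (TensorProduct.map LinearMap.id S (Δ x)) = algebraMap k H (ε x) := by
    intro n x hx
    rcases Nat.eq_zero_or_pos n with hn | hn
    · -- degree 0
      subst hn
      rw [connected] at hx
      obtain ⟨c, rfl⟩ := hx
      have : Δ (Algebra.linearMap k H c) = c • ((1 : H) ⊗ₜ[k] (1 : H)) := by
        simp only [Algebra.linearMap_apply, AlgHom.commutes]
        rw [Algebra.algebraMap_eq_smul_one]
        rfl
      rw [this, map_smul, map_smul]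
      simp [hS1, Algebra.algebraMap_eq_smul_one]
    · -- positive degree
      obtain ⟨m, rfl⟩ : ∃ m, n = m + 1 := ⟨n - 1, by omega⟩
      set n := m + 1
      have hεx : ε x = 0 := hker n hn x hx
      -- decompose Δ x
      obtain ⟨y, hy, z, hz, hyz⟩ := Submodule.mem_sup.mp (graded n x hx)
      -- `y = 1 ⊗ y₀` with `y₀ ∈ ℋ n`
      have hy' : y ∈ Submodule.map (TensorProduct.mk k H H 1) (ℋ n) := by
        have key : ∀ w : (ℋ 0) ⊗[k] (ℋ n),
            TensorProduct.map (ℋ 0).subtype (ℋ n).subtype w ∈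
              Submodule.map (TensorProduct.mk k H H 1) (ℋ n) := by
          intro w
          induction w with
          | zero => simp
          | tmul a b =>
              have ha : (a : H) ∈ LinearMap.range (Algebra.linearMap k H) := by
                rw [← connected]; exact a.2
              obtain ⟨c, hc⟩ := ha
              refine ⟨c • (b : H), Submodule.smul_mem _ _ b.2, ?_⟩
              simp only [TensorProduct.map_tmul, Submodule.coe_subtype, TensorProduct.mk_apply]
              rw [← hc, Algebra.linearMap_apply, Algebra.algebraMap_eq_smul_one,
                TensorProduct.smul_tmul]
          | add u v hu hv =>
              rw [map_add]
              exact Submodule.add_mem _ hu hv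
        obtain ⟨w, hw⟩ := hy
        rw [← hw]
        exact key w
      obtain ⟨y₀, hy₀mem, hy₀⟩ := hy'
      -- second factors of z: `map ε id z = 0`
      have hzker : (⨆ (p : ℕ) (q : ℕ) (_ : p + q = n) (_ : 0 < p) (_ : 0 < q),
          tpSub k (ℋ p) (ℋ q)) ≤
          LinearMap.ker (TensorProduct.map ε.toLinearMap (LinearMap.id (M := H))) := by
        refine iSup_le fun p => iSup_le fun q => iSup_le fun hpq => iSup_le fun hp =>
          iSup_le fun hq => ?_
        have key : ∀ w : (ℋ p) ⊗[k] (ℋ q),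
            TensorProduct.map ε.toLinearMap (LinearMap.id (M := H))
              (TensorProduct.map (ℋ p).subtype (ℋ q).subtype w) = 0 := by
          intro w
          induction w with
          | zero => simp
          | tmul a b =>
              simp only [TensorProduct.map_tmul, Submodule.coe_subtype, AlgHom.toLinearMap_apply,
                hker p hp a a.2, TensorProduct.zero_tmul]
          | add u v hu hv => rw [map_add, map_add, hu, hv, add_zero]
        rintro _ ⟨w, rfl⟩
        rw [LinearMap.mem_ker]
        exact key w
      have hεz : TensorProduct.map ε.toLinearMap LinearMap.id z = 0 := hzker hz
      -- hence `y₀ = x` via left counicity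
      have hy₀x : y₀ = x := by
        have h1 := left_counit x
        rw [← hyz, map_add, hεz, add_zero, ← hy₀] at h1
        have h2 : (1 : k) ⊗ₜ[k] y₀ = (1 : k) ⊗ₜ[k] x := by
          simpa [TensorProduct.map_tmul] using h1
        have := congrArg (TensorProduct.lid k H) h2
        simpa using this
      -- `mul' ∘ (id ⊗ S)` agrees with `mul' ∘ (id ⊗ Fmap m)` on z
      have hagree : (⨆ (p : ℕ) (q : ℕ) (_ : p + q = n) (_ : 0 < p) (_ : 0 < q),
          tpSub k (ℋ p) (ℋ q)) ≤
          LinearMap.ker ((LinearMap.mul' k H ∘ₗ TensorProduct.map LinearMap.id S) -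
            (LinearMap.mul' k H ∘ₗ TensorProduct.map LinearMap.id (Fmap ℋ internal Δ m))) := by
        refine iSup_le fun p => iSup_le fun q => iSup_le fun hpq => iSup_le fun hp =>
          iSup_le fun hq => ?_
        have key : ∀ w : (ℋ p) ⊗[k] (ℋ q),
            ((LinearMap.mul' k H ∘ₗ TensorProduct.map LinearMap.id S) -
              (LinearMap.mul' k H ∘ₗ TensorProduct.map LinearMap.id (Fmap ℋ internal Δ m)))
              (TensorProduct.map (ℋ p).subtype (ℋ q).subtype w) = 0 := by
          intro w
          induction w with
          | zero => simp
          | tmul a b =>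
              have hqm : q ≤ m := by omega
              simp only [LinearMap.sub_apply, LinearMap.coe_comp, Function.comp_apply,
                TensorProduct.map_tmul, Submodule.coe_subtype, LinearMap.id_coe, id_eq]
              rw [hSF m q hqm (b : H) b.2, sub_self]
          | add u v hu hv => rw [map_add, map_add, hu, hv, add_zero]
        rintro _ ⟨w, rfl⟩
        rw [LinearMap.mem_ker]
        exact key w
      have hagree' : (LinearMap.mul' k H) (TensorProduct.map LinearMap.id S z) =
          (LinearMap.mul' k H) (TensorProduct.map LinearMap.id (Fmap ℋ internal Δ m) z) := by
        have := hagree hz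
        rw [LinearMap.mem_ker, LinearMap.sub_apply, sub_eq_zero] at this
        simpa using this
      -- compute S x
      have hΔx : Δ x = (1 : H) ⊗ₜ[k] x + z := by rw [← hyz, ← hy₀, hy₀x]; rfl
      have hFm0 : Fmap ℋ internal Δ m x = 0 := Fmap_eq_zero ℋ internal Δ hx m (by omega)
      have hSx : S x = - (LinearMap.mul' k H)
          (TensorProduct.map LinearMap.id (Fmap ℋ internal Δ m) z) := by
        rw [hS, Smap_of_mem ℋ internal Δ hx]
        show Fmap ℋ internal Δ (m + 1) x = _
        rw [Fmap]
        simp only [LinearMap.sub_apply, LinearMap.coe_comp, Function.comp_apply]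
        rw [hFm0, proj_of_mem ℋ internal hx]
        show (0 : H) - (LinearMap.mul' k H)
            (TensorProduct.map LinearMap.id (Fmap ℋ internal Δ m) (Δ x)) = _
        rw [hΔx, map_add, map_add, TensorProduct.map_tmul]
        simp only [LinearMap.id_coe, id_eq, hFm0]
        rw [TensorProduct.tmul_zero]
        simp
      -- conclude
      rw [hΔx, map_add, map_add, TensorProduct.map_tmul]
      simp only [LinearMap.id_coe, id_eq]
      rw [LinearMap.mul'_apply, one_mul, hSx, hagree', hεx, map_zero]
      simp
  -- extend to all of H
  intro x
  have htop : x ∈ (⊤ : Submodule k H) := trivial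
  rw [← internal.submodule_iSup_eq_top] at htop
  have hle : (⨆ n, ℋ n) ≤ LinearMap.ker
      ((LinearMap.mul' k H ∘ₗ TensorProduct.map LinearMap.id S ∘ₗ Δ.toLinearMap) -
        (Algebra.linearMap k H ∘ₗ ε.toLinearMap)) := by
    refine iSup_le fun n x hx => ?_
    rw [LinearMap.mem_ker, LinearMap.sub_apply]
    simp only [LinearMap.coe_comp, Function.comp_apply, AlgHom.toLinearMap_apply,
      Algebra.linearMap_apply]
    rw [main n x hx, sub_self]
  have := hle htop
  rw [LinearMap.mem_ker, LinearMap.sub_apply, sub_eq_zero] at this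
  simpa using this
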